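/- If two DAGs G and H on [n] have the same skeleton and the same unshielded colliders, then for every K ⊆ [n] and every pair of vertices i, j, there is a *-connecting path between i and j given K in G if and only if there is one in H. -/

import Mathlib

/-- A walk in the skeleton of the digraph `E`: consecutive vertices are adjacent. -/
def IsWalk {n : ℕ} (E : Fin n → Fin n → Prop) (p : List (Fin n)) : Prop :=
  p.Chain' fun a b => E a b ∨ E b a

/-- Ancestors of the set `K` (including `K` itself): vertices with a directed path
into `K`. -/
def ancSet {n : ℕ} (E : Fin n → Fin n → Prop) (K : Set (Fin n)) : Set (Fin n) :=
  {v | ∃ k ∈ K, Relation.ReflTransGen E v k}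

/-- A path (as a list of vertices) is d-connecting given `K` if it is a walk in the
skeleton, every collider on it lies in `K ∪ an(K)`, and no non-collider on it lies
in `K`. -/
def DConnecting {n : ℕ} (E : Fin n → Fin n → Prop) (K : Set (Fin n))
    (p : List (Fin n)) : Prop :=
  IsWalk E p ∧
  ∀ a b c : Fin n, [a, b, c] <:+: p →
    ((E a b ∧ E c b) → b ∈ ancSet E K) ∧ (¬(E a b ∧ E c b) → b ∉ K)

open Classical in
/-- The number of colliders on a path. -/
noncomputable def colliderCount {n : ℕ} (E : Fin n → Fin n → Prop) :
    List (Fin n) → ℕ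
  | a :: b :: c :: rest =>
      (if E a b ∧ E c b then 1 else 0) + colliderCount E (b :: c :: rest)
  | _ => 0

/-- A path is *-connecting given `K` if it is d-connecting given `K` and contains at
most one collider. -/
def StarConnecting {n : ℕ} (E : Fin n → Fin n → Prop) (K : Set (Fin n))
    (p : List (Fin n)) : Prop :=
  DConnecting E K p ∧ colliderCount E p ≤ 1

/-- `i` and `j` are d-connected given `K`. -/
def DConn {n : ℕ} (E : Fin n → Fin n → Prop) (K : Set (Fin n)) (i j : Fin n) : Prop :=
  ∃ p : List (Fin n), p.head? = some i ∧ p.getLast? = some j ∧ 2 ≤ p.length ∧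
    DConnecting E K p

/-- `i` and `j` are *-connected given `K`. -/
def StarConn {n : ℕ} (E : Fin n → Fin n → Prop) (K : Set (Fin n)) (i j : Fin n) : Prop :=
  ∃ p : List (Fin n), p.head? = some i ∧ p.getLast? = some j ∧ 2 ≤ p.length ∧
    StarConnecting E K p

/-- `K` d-separates `I` and `J`. -/
def DSep {n : ℕ} (E : Fin n → Fin n → Prop) (I J K : Set (Fin n)) : Prop :=
  ∀ i ∈ I, ∀ j ∈ J, ¬ DConn E K i j

/-- `K` *-separates `I` and `J`. -/
def StarSep {n : ℕ} (E : Fin n → Fin n → Prop) (I J K : Set (Fin n)) : Prop :=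
  ∀ i ∈ I, ∀ j ∈ J, ¬ StarConn E K i j

/-- `E` and `F` have the same skeleton. -/
def SameSkeleton {n : ℕ} (E F : Fin n → Fin n → Prop) : Prop :=
  ∀ i j, (E i j ∨ E j i) ↔ (F i j ∨ F j i)

/-- `(i, k, j)` is an unshielded collider: `i → k ← j` with `i, j` nonadjacent. -/
def UnshieldedCollider {n : ℕ} (E : Fin n → Fin n → Prop) (i k j : Fin n) : Prop :=
  E i k ∧ E j k ∧ i ≠ j ∧ ¬(E i j ∨ E j i)

namespace SP

variable {n : ℕ}

open Classical

def Adj (E : Fin n → Fin n → Prop) (a b : Fin n) : Prop := E a b ∨ E b a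

def Stp (E : Fin n → Fin n → Prop) (K : Set (Fin n)) (a b : Fin n) : Prop := E a b ∧ b ∉ K

def Dp (E : Fin n → Fin n → Prop) (K : Set (Fin n)) : Fin n → Fin n → Prop :=
  Relation.ReflTransGen (Stp E K)

def Trek (E : Fin n → Fin n → Prop) (K : Set (Fin n)) (x y : Fin n) : Prop :=
  ∃ t, t ∉ K ∧ Dp E K t x ∧ Dp E K t y

def Into (E : Fin n → Fin n → Prop) (K : Set (Fin n)) (x c : Fin n) : Prop :=
  ∃ a, Trek E K x a ∧ E a c

def Col (E : Fin n → Fin n → Prop) (K : Set (Fin n)) (i j : Fin n) : Prop :=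
  ∃ c, c ∈ ancSet E K ∧ Into E K i c ∧ Into E K j c

def NoCol (E : Fin n → Fin n → Prop) (l : List (Fin n)) : Prop :=
  ∀ a b c, [a,b,c] <:+: l → ¬(E a b ∧ E c b)

def NCW (E : Fin n → Fin n → Prop) (K : Set (Fin n)) (l : List (Fin n)) (x y : Fin n) : Prop :=
  IsWalk E l ∧ NoCol E l ∧ (∀ v ∈ l, v ∉ K) ∧ l.head? = some x ∧ l.getLast? = some y

section Infix
variable {α : Type*}

lemma prefix2_append {b c : α} {l₁ l₂ : List α} (h : [b,c] <+: l₁ ++ l₂) :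
    [b,c] <+: l₁ ∨ (l₁ = [] ∧ [b,c] <+: l₂) ∨ (l₁ = [b] ∧ l₂.head? = some c) := by
  match l₁ with
  | [] => exact Or.inr (Or.inl ⟨rfl, h⟩)
  | [u] =>
    obtain ⟨t, ht⟩ := h
    simp only [List.cons_append, List.nil_append, List.singleton_append] at ht
    injection ht with h1 ht
    exact Or.inr (Or.inr ⟨by rw [h1], by rw [← ht]; rfl⟩)
  | u :: v :: r =>
    obtain ⟨t, ht⟩ := h
    simp only [List.cons_append] at ht
    injection ht with h1 ht; injection ht with h2 ht
    exact Or.inl ⟨r, by rw [h1, h2]; rfl⟩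

/-- Decomposition of a 3-element infix of an append. -/
lemma trip_append {a b c : α} {l₁ l₂ : List α} (h : [a,b,c] <:+: l₁ ++ l₂) :
    [a,b,c] <:+: l₁ ∨ [a,b,c] <:+: l₂ ∨
    (∃ p, l₁ = p ++ [a] ∧ [b,c] <+: l₂) ∨
    (∃ p, l₁ = p ++ [a, b] ∧ l₂.head? = some c) := by
  induction l₁ with
  | nil => exact Or.inr (Or.inl h)
  | cons x l₁' ih =>
    rw [List.cons_append, List.infix_cons_iff] at h
    rcases h with h | h
    · -- prefix of x :: (l₁' ++ l₂)
      obtain ⟨t, ht⟩ := h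
      simp only [List.cons_append] at ht
      injection ht with h1 ht
      subst h1
      have hp : [b,c] <+: l₁' ++ l₂ := ⟨t, ht⟩
      rcases prefix2_append hp with hp | ⟨he, hp⟩ | ⟨he, hp⟩
      · left
        obtain ⟨t', ht'⟩ := hp
        exact ⟨[], t', by rw [← ht']; simp⟩
      · subst he
        exact Or.inr (Or.inr (Or.inl ⟨[], by simp, hp⟩))
      · rw [he]
        exact Or.inr (Or.inr (Or.inr ⟨[], by simp, hp⟩))
    · rcases ih h with h | h | ⟨p, hp, h2⟩ | ⟨p, hp, h2⟩
      · exact Or.inl (List.infix_cons_iff.2 (Or.inr h))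
      · exact Or.inr (Or.inl h)
      · exact Or.inr (Or.inr (Or.inl ⟨x :: p, by rw [hp]; rfl, h2⟩))
      · exact Or.inr (Or.inr (Or.inr ⟨x :: p, by rw [hp]; rfl, h2⟩))


end Infix

section Basic
variable {E : Fin n → Fin n → Prop} {K : Set (Fin n)}

lemma acyc1 (hE : ∀ i, ¬ Relation.TransGen E i i) {a : Fin n} : ¬ E a a :=
  fun h => hE a (Relation.TransGen.single h)

lemma acyc2 (hE : ∀ i, ¬ Relation.TransGen E i i) {a b : Fin n} (h1 : E a b) : ¬ E b a :=
  fun h2 => hE a ((Relation.TransGen.single h1).tail h2)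

lemma acyc3 (hE : ∀ i, ¬ Relation.TransGen E i i) {a b c : Fin n}
    (h1 : E a b) (h2 : E b c) : ¬ E c a :=
  fun h3 => hE a (((Relation.TransGen.single h1).tail h2).tail h3)

lemma trek_refl {x : Fin n} (hx : x ∉ K) : Trek E K x x :=
  ⟨x, hx, Relation.ReflTransGen.refl, Relation.ReflTransGen.refl⟩

lemma trek_symm {x y : Fin n} (h : Trek E K x y) : Trek E K y x := by
  obtain ⟨t, ht, h1, h2⟩ := h; exact ⟨t, ht, h2, h1⟩

lemma dp_notK {t x : Fin n} (h : Dp E K t x) (ht : t ∉ K) : x ∉ K := by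
  induction h with
  | refl => exact ht
  | tail _ h2 _ => exact h2.2

lemma trek_left_notK {x y : Fin n} (h : Trek E K x y) : x ∉ K := by
  obtain ⟨t, ht, h1, _⟩ := h; exact dp_notK h1 ht

end Basic
end SP

namespace SP
open Classical
variable {n : ℕ} {E : Fin n → Fin n → Prop} {K : Set (Fin n)}

lemma chain'_pair {α : Type*} {R : α → α → Prop} {l : List α} {u v : α}
    (h : l.Chain' R) (hp : [u,v] <+: l) : R u v := by
  obtain ⟨t, ht⟩ := hp
  subst ht
  exact (List.isChain_cons_cons.1 h).1

lemma chain'_trip {α : Type*} {R : α → α → Prop} {l : List α} {u v w : α}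
    (h : l.Chain' R) (hp : [u,v,w] <:+: l) : R u v ∧ R v w := by
  have h' := h.infix hp
  exact ⟨(List.isChain_cons_cons.1 h').1, (List.isChain_cons_cons.1 (List.isChain_cons_cons.1 h').2).1⟩

lemma chain_stp_notK {t : Fin n} {l : List (Fin n)} (h : List.Chain (Stp E K) t l) :
    ∀ v ∈ l, v ∉ K := by
  induction l generalizing t with
  | nil => simp
  | cons w r ih =>
    have h' : List.IsChain (Stp E K) (t :: w :: r) := h
    rw [List.isChain_cons_cons] at h'
    intro v hv
    rcases List.mem_cons.1 hv with rfl | hv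
    · exact h'.1.2
    · exact ih h'.2 v hv

lemma nocol_infix {l l' : List (Fin n)} (h : NoCol E l) (hl : l' <:+: l) : NoCol E l' :=
  fun a b c ht => h a b c (ht.trans hl)

lemma nocol_reverse {l : List (Fin n)} (h : NoCol E l) : NoCol E l.reverse := by
  intro a b c ht hcol
  have ht' : [c,b,a] <:+: l := by
    have := ht.reverse
    simpa using this
  exact h c b a ht' ⟨hcol.2, hcol.1⟩

lemma walk_reverse {l : List (Fin n)} (h : IsWalk E l) : IsWalk E l.reverse := by
  rw [IsWalk, List.Chain', List.isChain_reverse]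
  exact h.imp fun a b hab => hab.symm

lemma ncw_reverse {l : List (Fin n)} {x y : Fin n} (h : NCW E K l x y) :
    NCW E K l.reverse y x := by
  obtain ⟨hw, hnc, hK, hh, hl⟩ := h
  exact ⟨walk_reverse hw, nocol_reverse hnc, fun v hv => hK v (List.mem_reverse.1 hv),
    by rw [List.head?_reverse]; exact hl, by rw [List.getLast?_reverse]; exact hh⟩

lemma ncw_singleton {x : Fin n} (hx : x ∉ K) : NCW E K [x] x x := by
  refine ⟨List.isChain_singleton x, ?_, by simpa using hx, rfl, rfl⟩
  intro a b c ht
  exact absurd (List.IsInfix.length_le ht) (by simp)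

lemma fwd : ∀ (l : List (Fin n)) (x v : Fin n), IsWalk E (x::v::l) → NoCol E (x::v::l) →
    E x v → (v ∉ K) → (∀ u ∈ l, u ∉ K) → List.Chain (Stp E K) x (v::l) := by
  intro l
  induction l with
  | nil => exact fun x v _ _ hxv hv _ => List.Chain.cons ⟨hxv, hv⟩ List.Chain.nil
  | cons w r ih =>
    intro x v hw hnc hxv hv hK
    have htrip : [x,v,w] <:+: x::v::w::r := ⟨[], r, rfl⟩
    have hnvw : ¬ E w v := fun hwv => hnc x v w htrip ⟨hxv, hwv⟩
    have hw' : IsWalk E (v::w::r) := (List.isChain_cons_cons.1 hw).2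
    have hvw : E v w := ((List.isChain_cons_cons.1 hw').1).resolve_right hnvw
    have hnc' : NoCol E (v::w::r) :=
      nocol_infix hnc (List.infix_cons_iff.2 (Or.inr (List.infix_refl _)))
    exact List.Chain.cons ⟨hxv, hv⟩
      (ih v w hw' hnc' hvw (hK w (by simp)) (fun u hu => hK u (by simp [hu])))

end SP

namespace SP
open Classical
variable {n : ℕ} {E : Fin n → Fin n → Prop} {K : Set (Fin n)}

lemma head?_app {α : Type*} {l m : List α} {x : α} (h : l.head? = some x) :
    (l ++ m).head? = some x := by
  cases l with
  | nil => simp at h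
  | cons a t => simpa using h

lemma last?_app {α : Type*} {l m : List α} {x : α} (h : m.getLast? = some x) :
    (l ++ m).getLast? = some x := by
  have h1 : (l ++ m).reverse.head? = some x := by
    rw [List.reverse_append]
    exact head?_app (by rw [List.head?_reverse]; exact h)
  rw [List.head?_reverse] at h1
  exact h1

lemma chain'_pair_infix {α : Type*} {R : α → α → Prop} {l : List α} {u v : α}
    (h : l.Chain' R) (hp : [u,v] <:+: l) : R u v :=
  (List.isChain_cons_cons.1 (h.infix hp)).1

lemma prefix_infix_cons {α : Type*} {l l' : List α} {x : α} (h : l' <+: l) :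
    l' <:+: (x :: l) :=
  List.infix_cons_iff.2 (Or.inr h.isInfix)

lemma ncw_to_trek : ∀ (l : List (Fin n)) (x y : Fin n), NCW E K l x y → Trek E K x y := by
  intro l
  induction l with
  | nil => intro x y h; simp [NCW] at h
  | cons x' l' ih =>
    intro x y h
    obtain ⟨hw, hnc, hK, hh, hl⟩ := h
    have hx : x' = x := by simpa using hh
    subst hx
    cases l' with
    | nil =>
      have hy : x' = y := by simpa using hl
      exact hy ▸ trek_refl (hK x' (by simp))
    | cons v l'' =>
      have hadj : Adj E x' v := (List.isChain_cons_cons.1 hw).1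
      rcases hadj with hxv | hvx
      · -- descending
        have hchain : List.Chain (Stp E K) x' (v::l'') :=
          fwd l'' x' v hw hnc hxv (hK v (by simp)) (fun u hu => hK u (by simp [hu]))
        have hlast : (x'::v::l'').getLast (by simp) = y := by
          have := List.getLast?_eq_getLast (l := x'::v::l'') (by simp)
          rw [this] at hl
          exact (Option.some_injective _ hl.symm).symm
        have hdp : Dp E K x' y := List.relationReflTransGen_of_exists_isChain_cons _ hchain hlast
        exact ⟨x', hK x' (by simp), Relation.ReflTransGen.refl, hdp⟩
      · -- backward first edge
        have htail : NCW E K (v::l'') v y := by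
          refine ⟨(List.isChain_cons_cons.1 hw).2,
            nocol_infix hnc (List.infix_cons_iff.2 (Or.inr (List.infix_refl _))),
            fun u hu => hK u (by simp [hu]), rfl, ?_⟩
          rw [← hl]; exact (List.getLast?_cons_cons ..).symm
        obtain ⟨t, ht, h1, h2⟩ := ih v y htail
        exact ⟨t, ht, h1.tail ⟨hvx, hK x' (by simp)⟩, h2⟩

lemma trek_to_ncw (hE : ∀ i, ¬ Relation.TransGen E i i) {x y : Fin n}
    (h : Trek E K x y) : ∃ l, NCW E K l x y := by
  obtain ⟨t, ht, dpx, dpy⟩ := h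
  obtain ⟨lx, cx, lastx⟩ := List.exists_isChain_cons_of_relationReflTransGen dpx
  obtain ⟨ly, cy, lasty⟩ := List.exists_isChain_cons_of_relationReflTransGen dpy
  refine ⟨(t::lx).reverse ++ ly, ?_, ?_, ?_, ?_, ?_⟩
  · -- walk
    rw [IsWalk, List.Chain', List.isChain_append]
    refine ⟨walk_reverse ((cx.imp fun a b hab => Or.inl hab.1 : List.Chain (Adj E) t lx)), ?_, ?_⟩
    · cases ly with
      | nil => exact List.IsChain.nil
      | cons b l => exact (List.isChain_cons_cons.1
          ((cy.imp fun a b hab => (Or.inl hab.1 : Adj E a b)) : List.Chain' (Adj E) (t::b::l))).2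
    · intro u hu z hz
      rw [List.getLast?_reverse] at hu
      simp only [List.head?_cons, Option.mem_def, Option.some.injEq] at hu
      subst hu
      cases ly with
      | nil => simp at hz
      | cons b l =>
        simp only [List.head?_cons, Option.mem_def, Option.some.injEq] at hz
        subst hz
        exact Or.inl (List.chain_cons.1 cy).1.1
  · -- NoCol
    intro a b c htrip hcol
    have cx' : List.Chain' (Stp E K) (t::lx) := cx
    have cy' : List.Chain' (Stp E K) (t::ly) := cy
    rcases trip_append htrip with hin | hin | ⟨p, hp, hin⟩ | ⟨p, hp, hin⟩
    · have h2 : [c,b,a] <:+: (t::lx) := by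
        have := hin.reverse; simpa using this
      have := chain'_trip cx' h2
      exact acyc2 hE this.2.1 hcol.1
    · have := chain'_trip cy' (List.infix_cons_iff.2 (Or.inr hin))
      exact acyc2 hE this.2.1 hcol.2
    · have := chain'_pair_infix cy' (prefix_infix_cons hin)
      exact acyc2 hE this.1 hcol.2
    · have hrev : t::lx = [b,a] ++ p.reverse := by
        have := congrArg List.reverse hp
        simpa using this
      have h2 : [b,a] <+: (t::lx) := ⟨p.reverse, hrev.symm⟩
      have := chain'_pair_infix cx' h2.isInfix
      exact acyc2 hE this.1 hcol.1
  · intro v hv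
    rcases List.mem_append.1 hv with hv | hv
    · rw [List.mem_reverse] at hv
      rcases List.mem_cons.1 hv with rfl | hv
      · exact ht
      · exact chain_stp_notK cx v hv
    · exact chain_stp_notK cy v hv
  · refine head?_app ?_
    rw [List.head?_reverse, List.getLast?_eq_getLast (l := t::lx) (by simp), lastx]
  · cases ly with
    | nil =>
      have : t = y := by simpa using lasty
      subst this
      simp [List.getLast?_reverse]
    | cons b l =>
      refine last?_app ?_
      rw [List.getLast?_eq_getLast (l := b::l) (by simp)]
      rw [List.getLast_cons (by simp)] at lasty
      rw [lasty]

end SP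


namespace SP
open Classical
variable {n : ℕ} {E F : Fin n → Fin n → Prop} {K : Set (Fin n)}

lemma head?_same {α : Type*} (s : List α) (z : α) (m m' : List α) :
    (s ++ z :: m).head? = (s ++ z :: m').head? := by
  cases s <;> simp

lemma last?_app2 {α : Type*} {l m : List α} (h : m ≠ []) :
    (l ++ m).getLast? = m.getLast? := by
  have h1 : m.getLast? = some (m.getLast h) := List.getLast?_eq_getLast (l := m) h
  rw [h1]
  exact last?_app h1

lemma count_cons3 (a b c : Fin n) (rest : List (Fin n)) :
    colliderCount E (a::b::c::rest) =
      (if E a b ∧ E c b then 1 else 0) + colliderCount E (b::c::rest) := by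
  rw [colliderCount]

lemma count_cons_le (x : Fin n) (l : List (Fin n)) :
    colliderCount E l ≤ colliderCount E (x::l) := by
  match l with
  | [] => exact Nat.zero_le _
  | [b] => exact Nat.zero_le _
  | b::c::r => rw [count_cons3]; exact Nat.le_add_left _ _

lemma count_zero_of_nocol : ∀ {l : List (Fin n)}, NoCol E l → colliderCount E l = 0 := by
  intro l
  match l with
  | [] => intro _; rfl
  | [a] => intro _; rfl
  | [a,b] => intro _; rfl
  | a::b::c::r =>
    intro h
    rw [count_cons3]
    have h1 : ¬(E a b ∧ E c b) := h a b c ⟨[], r, rfl⟩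
    rw [if_neg h1, Nat.zero_add]
    exact count_zero_of_nocol (nocol_infix h (List.infix_cons_iff.2 (Or.inr (List.infix_refl _))))

lemma nocol_of_count_zero : ∀ {l : List (Fin n)}, colliderCount E l = 0 → NoCol E l := by
  intro l
  match l with
  | [] => intro _ a b c ht; exact absurd ht.length_le (by simp)
  | [a'] => intro _ a b c ht; exact absurd ht.length_le (by simp)
  | [a',b'] => intro _ a b c ht; exact absurd ht.length_le (by simp)
  | a'::b'::c'::r =>
    intro h a b c ht
    rw [count_cons3] at h
    have h1 := Nat.eq_zero_of_add_eq_zero_right h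
    have h2 := Nat.eq_zero_of_add_eq_zero_left h
    rcases List.infix_cons_iff.1 ht with hp | hin
    · obtain ⟨t, htl⟩ := hp
      injection htl with e1 htl; injection htl with e2 htl; injection htl with e3 _
      subst e1; subst e2; subst e3
      intro hcol
      rw [if_pos hcol] at h1
      exact absurd h1 (by simp)
    · exact nocol_of_count_zero h2 a b c hin

lemma count_le_one_mid : ∀ (A : List (Fin n)) (c : Fin n) (B : List (Fin n)),
    NoCol E (A ++ [c]) → NoCol E (c :: B) → colliderCount E (A ++ c :: B) ≤ 1 := by
  intro A
  induction A with
  | nil =>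
    intro c B _ h2
    rw [List.nil_append, count_zero_of_nocol h2]
    exact Nat.zero_le 1
  | cons x A' ih =>
    intro c B h1 h2
    match A' with
    | [] =>
      match B with
      | [] => exact Nat.zero_le 1
      | b :: B' =>
        show colliderCount E (x::c::b::B') ≤ 1
        rw [count_cons3, count_zero_of_nocol h2]
        split <;> simp
    | [y] =>
      match B with
      | [] =>
        show colliderCount E (x::y::c::([] : List (Fin n))) ≤ 1
        rw [count_cons3, if_neg (h1 x y c ⟨[], [], rfl⟩), Nat.zero_add]
        exact Nat.zero_le 1
      | b :: B' =>
        show colliderCount E (x::y::c::b::B') ≤ 1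
        rw [count_cons3, if_neg (h1 x y c ⟨[], [], rfl⟩), Nat.zero_add]
        exact ih c (b::B') (nocol_infix h1 ⟨[x], [], by simp⟩) h2
    | y :: z :: A'' =>
      show colliderCount E (x::y::z::(A''++c::B)) ≤ 1
      rw [count_cons3, if_neg (h1 x y z ⟨[], A'' ++ [c], by simp⟩), Nat.zero_add]
      exact ih c B (nocol_infix h1 ⟨[x], [], by simp⟩) h2

end SP

namespace SP
open Classical
variable {n : ℕ} {E F : Fin n → Fin n → Prop} {K : Set (Fin n)}

/-- Surgery removing an immediate backtrack `u,v,u`. -/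
lemma surgery_eq (hE : ∀ i, ¬ Relation.TransGen E i i) {s t : List (Fin n)} {u v x y : Fin n}
    (h : NCW E K (s ++ u :: v :: u :: t) x y) : NCW E K (s ++ u :: t) x y := by
  obtain ⟨hw, hnc, hK, hh, hl⟩ := h
  have hT1 : ¬ (E u v ∧ E u v) := hnc u v u ⟨s, t, by simp⟩
  have hnuv : ¬ E u v := fun h' => hT1 ⟨h', h'⟩
  rw [IsWalk, List.Chain', List.isChain_append] at hw
  obtain ⟨hws, hw2, hseam⟩ := hw
  have hvu : Adj E v u := (List.isChain_cons_cons.1 (List.isChain_cons_cons.1 hw2).2).1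
  have hwut : List.Chain' (Adj E) (u :: t) :=
    (List.isChain_cons_cons.1 (List.isChain_cons_cons.1 hw2).2).2
  constructor
  · rw [IsWalk, List.Chain', List.isChain_append]
    exact ⟨hws, hwut, by simpa using hseam⟩
  refine ⟨?_, ?_, ?_, ?_⟩
  · -- NoCol
    intro a b c htrip hcol
    rcases trip_append htrip with hin | hin | ⟨p, hp, hin⟩ | ⟨p, hp, hin⟩
    · exact hnc a b c (hin.trans ⟨[], u::v::u::t, by simp⟩) hcol
    · rcases List.infix_cons_iff.1 hin with hpre | hin'
      · obtain ⟨t', ht'⟩ := hpre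
        simp only [List.cons_append, List.nil_append] at ht'
        injection ht' with e1 ht2
        exact hnc a b c ⟨s ++ [a, v], t', by simp [← e1, ← ht2]⟩ hcol
      · exact hnc a b c (hin'.trans ⟨s ++ [u,v,u], [], by simp⟩) hcol
    · -- s = p ++ [a], [b,c] <+: u :: t
      obtain ⟨t', ht'⟩ := hin
      simp only [List.cons_append, List.nil_append] at ht'
      injection ht' with e1 ht2
      have hvb : E v b := by rw [e1]; exact hvu.resolve_right hnuv
      have hT0 : ¬ (E a b ∧ E v b) := hnc a b v ⟨p, b :: t, by simp [hp, ← e1]⟩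
      exact hT0 ⟨hcol.1, hvb⟩
    · -- s = p ++ [a, b], (u :: t).head? = some c
      have e1 : u = c := by simpa using hin
      exact hnc a b c ⟨p, v :: u :: t, by simp [hp, e1]⟩ hcol
  · intro w hw'
    apply hK
    rcases List.mem_append.1 hw' with h' | h'
    · exact List.mem_append.2 (Or.inl h')
    · rcases List.mem_cons.1 h' with rfl | h'
      · simp
      · simp [h']
  · rw [← hh]; exact head?_same s u t (v::u::t)
  · cases t with
    | nil =>
      rw [last?_app2 (by simp)] at hl ⊢
      simpa using hl
    | cons t1 t' =>
      rw [last?_app2 (l := s) (by simp), List.getLast?_cons_cons] at hl ⊢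
      rw [List.getLast?_cons_cons, List.getLast?_cons_cons] at hl
      exact hl


/-- Surgery shortcutting a chord `u–w` across a triple `u,v,w`. -/
lemma surgery_chord (hE : ∀ i, ¬ Relation.TransGen E i i) {s t : List (Fin n)} {u v w x y : Fin n}
    (hadj : Adj E u w)
    (h : NCW E K (s ++ u :: v :: w :: t) x y) : NCW E K (s ++ u :: w :: t) x y := by
  obtain ⟨hw, hnc, hK, hh, hl⟩ := h
  have hT1 : ¬ (E u v ∧ E w v) := hnc u v w ⟨s, t, by simp⟩
  rw [IsWalk, List.Chain', List.isChain_append] at hw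
  obtain ⟨hws, hw2, hseam⟩ := hw
  have hAuv : Adj E u v := (List.isChain_cons_cons.1 hw2).1
  have hAvw : Adj E v w := (List.isChain_cons_cons.1 (List.isChain_cons_cons.1 hw2).2).1
  have hwt : List.Chain' (Adj E) (w :: t) := (List.isChain_cons_cons.1 (List.isChain_cons_cons.1 hw2).2).2
  constructor
  · rw [IsWalk, List.Chain', List.isChain_append]
    exact ⟨hws, List.isChain_cons_cons.2 ⟨hadj, hwt⟩, by simpa using hseam⟩
  refine ⟨?_, ?_, ?_, ?_⟩
  · intro a b c htrip hcol
    rcases trip_append htrip with hin | hin | ⟨p, hp, hin⟩ | ⟨p, hp, hin⟩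
    · exact hnc a b c (hin.trans ⟨[], u::v::w::t, by simp⟩) hcol
    · rcases List.infix_cons_iff.1 hin with hpre | hin'
      · obtain ⟨t', ht'⟩ := hpre
        simp only [List.cons_append, List.nil_append] at ht'
        injection ht' with e1 ht2
        injection ht2 with e2 ht3
        have hnvb : ¬ E v b := fun hvb =>
          (hnc v b c ⟨s ++ [u], t', by simp [← e2, ← ht3]⟩) ⟨hvb, hcol.2⟩
        have hbv : E b v := by
          rw [e2] at hnvb ⊢
          exact hAvw.symm.resolve_right hnvb
        have hwv : E w v := e2 ▸ hbv
        have hvu : E v u := hAuv.resolve_left (fun huv => hT1 ⟨huv, hwv⟩)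
        exact acyc3 hE hcol.1 hbv (by rw [e1]; exact hvu)
      · exact hnc a b c (hin'.trans ⟨s ++ [u,v], [], by simp⟩) hcol
    · -- s = p ++ [a], [b,c] <+: u :: w :: t
      obtain ⟨t', ht'⟩ := hin
      simp only [List.cons_append, List.nil_append] at ht'
      injection ht' with e1 ht2
      injection ht2 with e2 ht3
      have hT0 : ¬ (E a b ∧ E v b) := hnc a b v ⟨p, w::t, by simp [hp, ← e1]⟩
      rw [e1] at hT0
      rw [e1, e2] at hcol
      have huv : E u v := hAuv.resolve_right (fun hvu => hT0 ⟨hcol.1, hvu⟩)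
      have hvw : E v w := hAvw.resolve_right (fun hwv => hT1 ⟨huv, hwv⟩)
      exact acyc3 hE huv hvw hcol.2
    · -- s = p ++ [a, b], head = c
      have e1 : u = c := by simpa using hin
      exact hnc a b c ⟨p, v :: w :: t, by simp [hp, e1]⟩ hcol
  · intro z hz
    apply hK
    rcases List.mem_append.1 hz with h' | h'
    · exact List.mem_append.2 (Or.inl h')
    · rcases List.mem_cons.1 h' with rfl | h'
      · simp
      · simp [h']
  · rw [← hh]; exact head?_same s u (w::t) (v::w::t)
  · cases t with
    | nil =>
      rw [last?_app2 (by simp)] at hl ⊢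
      simpa using hl
    | cons t1 t' =>
      rw [last?_app2 (l := s) (by simp)] at hl ⊢
      simp only [List.getLast?_cons_cons] at hl ⊢
      exact hl


lemma ncw_transfer (hE : ∀ i, ¬ Relation.TransGen E i i)
    (hskel : SameSkeleton E F)
    (huc : ∀ i k j, UnshieldedCollider E i k j ↔ UnshieldedCollider F i k j) :
    ∀ (N : ℕ) (l : List (Fin n)) (x y : Fin n), l.length ≤ N → NCW E K l x y →
      Trek F K x y := by
  intro N
  induction N with
  | zero =>
    intro l x y hlen h
    cases l with
    | nil => simp [NCW] at h
    | cons a l' => simp at hlen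
  | succ N ih =>
    intro l x y hlen h
    by_cases hbad : ∃ a b c, [a,b,c] <:+: l ∧ (a = c ∨ E a c ∨ E c a)
    · obtain ⟨a, b, c, ⟨p, q, heq⟩, hcase⟩ := hbad
      subst heq
      simp only [List.append_assoc, List.cons_append, List.nil_append] at h hlen ⊢
      rcases hcase with rfl | hchord
      · have h' : NCW E K (p ++ a :: q) x y := surgery_eq hE h
        refine ih (p ++ a :: q) x y ?_ h'
        simp only [List.length_append, List.length_cons] at hlen ⊢
        omega
      · have h' : NCW E K (p ++ a :: c :: q) x y := surgery_chord hE hchord h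
        refine ih (p ++ a :: c :: q) x y ?_ h'
        simp only [List.length_append, List.length_cons] at hlen ⊢
        omega
    · push_neg at hbad
      obtain ⟨hw, hnc, hK, hh, hl⟩ := h
      refine ncw_to_trek l x y ⟨?_, ?_, hK, hh, hl⟩
      · exact hw.imp fun a b hab => (hskel a b).1 hab
      · intro a b c ht hcolF
        obtain ⟨hne, hnadj⟩ := hbad a b c ht
        have hnadjF : ¬ (F a c ∨ F c a) := fun hf =>
          (fun h' => h'.elim hnadj.1 hnadj.2) ((hskel a c).2 hf)
        have hucF : UnshieldedCollider F a b c := ⟨hcolF.1, hcolF.2, hne, hnadjF⟩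
        have hucE := (huc a b c).2 hucF
        exact hnc a b c ht ⟨hucE.1, hucE.2.1⟩

lemma trek_transfer (hE : ∀ i, ¬ Relation.TransGen E i i)
    (hskel : SameSkeleton E F)
    (huc : ∀ i k j, UnshieldedCollider E i k j ↔ UnshieldedCollider F i k j)
    {x y : Fin n} (h : Trek E K x y) : Trek F K x y := by
  obtain ⟨l, hl⟩ := trek_to_ncw hE h
  exact ncw_transfer hE hskel huc l.length l x y le_rfl hl


def NiceCol (E : Fin n → Fin n → Prop) (K : Set (Fin n)) (i j : Fin n) : Prop :=
  ∃ a b c, a ≠ b ∧ ¬ (E a b ∨ E b a) ∧ Trek E K i a ∧ Trek E K j b ∧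
    E a c ∧ E b c ∧ c ∈ ancSet E K

lemma anc_step {a c : Fin n} (hac : E a c) (h : c ∈ ancSet E K) : a ∈ ancSet E K := by
  obtain ⟨k, hk, hr⟩ := h
  exact ⟨k, hk, Relation.ReflTransGen.head hac hr⟩

lemma anc_of_K {c : Fin n} (h : c ∈ K) : c ∈ ancSet E K :=
  ⟨c, h, Relation.ReflTransGen.refl⟩

lemma mem_of_last? {α : Type*} {l : List α} {a : α} (h : l.getLast? = some a) : a ∈ l := by
  have h1 : l.reverse.head? = some a := by rw [List.head?_reverse]; exact h
  rw [← List.mem_reverse]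
  exact List.mem_of_mem_head? h1

lemma ncw_last_notK {l : List (Fin n)} {x a : Fin n} (h : NCW E K l x a) : a ∉ K :=
  h.2.2.1 a (mem_of_last? h.2.2.2.2)

lemma ncw_snoc (hE : ∀ i, ¬ Relation.TransGen E i i) {l : List (Fin n)} {x a b : Fin n}
    (h : NCW E K l x a) (hab : E a b) (hb : b ∉ K) : NCW E K (l ++ [b]) x b := by
  obtain ⟨hw, hnc, hK, hh, hl⟩ := h
  refine ⟨?_, ?_, ?_, head?_app hh, List.getLast?_concat⟩
  · rw [IsWalk, List.Chain', List.isChain_append]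
    refine ⟨hw, List.isChain_singleton b, ?_⟩
    intro p hp q hq
    simp only [List.head?_cons, Option.mem_def, Option.some.injEq] at hq
    subst hq
    rw [hl] at hp
    simp only [Option.mem_def, Option.some.injEq] at hp
    subst hp
    exact Or.inl hab
  · intro a' b' c' ht hcol
    rcases trip_append ht with hin | hin | ⟨p, hp, hin⟩ | ⟨p, hp, hin⟩
    · exact hnc a' b' c' hin hcol
    · exact absurd hin.length_le (by simp)
    · exact absurd hin.length_le (by simp)
    · have hc' : b = c' := by simpa using hin
      have hb' : b' = a := by
        rw [hp, show p ++ [a', b'] = (p ++ [a']) ++ [b'] by simp,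
          List.getLast?_concat] at hl
        exact Option.some_injective _ hl
      refine acyc2 hE hab ?_
      rw [hb', ← hc'] at hcol
      exact hcol.2
  · intro v hv
    rcases List.mem_append.1 hv with h' | h'
    · exact hK v h'
    · rcases List.mem_cons.1 h' with rfl | h'
      · exact hb
      · simp at h'


lemma ncw_app_dp (hE : ∀ i, ¬ Relation.TransGen E i i) {l : List (Fin n)} {x a y : Fin n}
    (h : NCW E K l x a) (hdp : Dp E K a y) : Trek E K x y := by
  induction hdp using Relation.ReflTransGen.head_induction_on generalizing l with
  | refl => exact ncw_to_trek l x y h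
  | head hstep hrest ih => exact ih (ncw_snoc hE h hstep.1 hstep.2)

lemma ncw_last_split (hE : ∀ i, ¬ Relation.TransGen E i i) {l : List (Fin n)} {x a : Fin n}
    (h : NCW E K l x a) :
    Dp E K a x ∨ ∃ l' y, l = l' ++ [a] ∧ NCW E K l' x y ∧ E y a := by
  have h' := ncw_reverse h
  obtain ⟨hw, hnc, hK, hh, hl⟩ := h'
  cases hrev : l.reverse with
  | nil => rw [hrev] at hh; simp at hh
  | cons a' r =>
    rw [hrev] at hw hnc hK hh hl
    have ha' : a' = a := by simpa using hh
    subst ha'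
    cases r with
    | nil =>
      left
      have : a' = x := by simpa using hl
      subst this
      exact Relation.ReflTransGen.refl
    | cons z r' =>
      have hadj : Adj E a' z := (List.isChain_cons_cons.1 hw).1
      rcases hadj with haz | hza
      · left
        have hchain : List.Chain (Stp E K) a' (z::r') :=
          fwd r' a' z hw hnc haz (hK z (by simp)) (fun u hu => hK u (by simp [hu]))
        have hlast : (a'::z::r').getLast (by simp) = x := by
          have h2 := List.getLast?_eq_getLast (l := a'::z::r') (by simp)
          rw [h2] at hl
          exact (Option.some_injective _ hl.symm).symm
        exact List.relationReflTransGen_of_exists_isChain_cons _ hchain hlast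
      · right
        have htail : NCW E K (z::r') z x := by
          refine ⟨(List.isChain_cons_cons.1 hw).2,
            nocol_infix hnc (List.infix_cons_iff.2 (Or.inr (List.infix_refl _))),
            fun u hu => hK u (by simp [hu]), rfl, ?_⟩
          rw [← hl]; exact (List.getLast?_cons_cons ..).symm
        refine ⟨(z::r').reverse, z, ?_, ncw_reverse htail, hza⟩
        have := congrArg List.reverse hrev
        rw [List.reverse_reverse] at this
        rw [this]
        simp

lemma nicecol_symm {i j : Fin n} (h : NiceCol E K j i) : NiceCol E K i j := by
  obtain ⟨a, b, c, hne, hnadj, h1, h2, hac, hbc, hanc⟩ := h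
  exact ⟨b, a, c, hne.symm, fun h' => hnadj h'.symm, h2, h1, hbc, hac, hanc⟩

lemma colRed (hE : ∀ i, ¬ Relation.TransGen E i i) :
    ∀ (N : ℕ) (l1 l2 : List (Fin n)) (i j a b c : Fin n),
    l1.length + l2.length ≤ N → NCW E K l1 i a → NCW E K l2 j b →
    E a c → E b c → c ∈ ancSet E K → Trek E K i j ∨ NiceCol E K i j := by
  intro N
  induction N with
  | zero =>
    intro l1 l2 i j a b c hlen h1 h2 _ _ _
    cases l1 with
    | nil => simp [NCW] at h1
    | cons u l1' => simp at hlen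
  | succ N ih =>
    intro l1 l2 i j a b c hlen h1 h2 hac hbc hanc
    have haK : a ∉ K := ncw_last_notK h1
    have hbK : b ∉ K := ncw_last_notK h2
    by_cases hab : a = b
    · subst hab
      rcases ncw_last_split hE h2 with hdp2 | ⟨l2', y2, hl2e, h2', hy2⟩
      · exact Or.inl (ncw_app_dp hE h1 hdp2)
      rcases ncw_last_split hE h1 with hdp1 | ⟨l1', y1, hl1e, h1', hy1⟩
      · exact Or.inl (trek_symm (ncw_app_dp hE h2 hdp1))
      · refine ih l1' l2' i j y1 y2 a ?_ h1' h2' hy1 hy2 (anc_step hac hanc)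
        rw [hl1e, hl2e] at hlen
        simp only [List.length_append, List.length_cons] at hlen ⊢
        omega
    · by_cases hadj : E a b ∨ E b a
      · have aux : ∀ (i' j' a' b' : Fin n) (m1 m2 : List (Fin n)),
            m1.length + m2.length ≤ N + 1 → NCW E K m1 i' a' → NCW E K m2 j' b' →
            E a' c → E b' c → E a' b' →
            Trek E K i' j' ∨ NiceCol E K i' j' := by
          intro i' j' a' b' m1 m2 hlen' h1' h2' hac' hbc' heab
          rcases ncw_last_split hE h2' with hdp2 | ⟨l2', y2, hl2e, h2'', hy2⟩
          · exact Or.inl (ncw_app_dp hE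
              (ncw_snoc hE h1' heab (ncw_last_notK h2')) hdp2)
          · refine ih m1 l2' i' j' a' y2 b' ?_ h1' h2'' heab hy2 (anc_step hbc' hanc)
            rw [hl2e] at hlen'
            simp only [List.length_append, List.length_cons] at hlen' ⊢
            omega
        rcases hadj with heab | heba
        · exact aux i j a b l1 l2 hlen h1 h2 hac hbc heab
        · rcases aux j i b a l2 l1 (by omega) h2 h1 hbc hac heba with ht | hn
          · exact Or.inl (trek_symm ht)
          · exact Or.inr (nicecol_symm hn)
      · exact Or.inr ⟨a, b, c, hab, hadj, ncw_to_trek l1 i a h1, ncw_to_trek l2 j b h2,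
          hac, hbc, hanc⟩


def distSet (E : Fin n → Fin n → Prop) (K : Set (Fin n)) (c : Fin n) : Set ℕ :=
  {r | ∃ l : List (Fin n), List.Chain E c l ∧ l.length = r ∧
    (c::l).getLast (List.cons_ne_nil _ _) ∈ K}

noncomputable def dK (E : Fin n → Fin n → Prop) (K : Set (Fin n)) (c : Fin n) : ℕ :=
  sInf (distSet E K c)

lemma distSet_nonempty {c : Fin n} (h : c ∈ ancSet E K) : (distSet E K c).Nonempty := by
  obtain ⟨k, hk, hr⟩ := h
  obtain ⟨l, hc, hlast⟩ := List.exists_isChain_cons_of_relationReflTransGen hr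
  exact ⟨l.length, l, hc, rfl, hlast ▸ hk⟩

lemma dK_of_K {c : Fin n} (h : c ∈ K) : dK E K c = 0 :=
  Nat.le_zero.1 (Nat.sInf_le ⟨[], List.Chain.nil, rfl, h⟩)

lemma K_of_dK_zero {c : Fin n} (hne : (distSet E K c).Nonempty) (h : dK E K c = 0) :
    c ∈ K := by
  have hmem := Nat.sInf_mem hne
  rw [show sInf (distSet E K c) = dK E K c from rfl, h] at hmem
  obtain ⟨l, hc, hlen, hlast⟩ := hmem
  rw [List.length_eq_zero_iff] at hlen
  subst hlen
  simpa using hlast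

lemma dK_le_succ {c d : Fin n} (hcd : E c d) (hd : (distSet E K d).Nonempty) :
    dK E K c ≤ dK E K d + 1 := by
  have hmem := Nat.sInf_mem hd
  obtain ⟨l, hc, hlen, hlast⟩ := hmem
  refine Nat.sInf_le ⟨d :: l, List.Chain.cons hcd hc, by simp [hlen]; rfl, ?_⟩
  rw [List.getLast_cons_cons]
  exact hlast

lemma dK_step {c : Fin n} (hne : (distSet E K c).Nonempty) {r : ℕ}
    (h : dK E K c = r + 1) :
    ∃ d, E c d ∧ (distSet E K d).Nonempty ∧ dK E K d = r := by
  have hmem := Nat.sInf_mem hne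
  rw [show sInf (distSet E K c) = dK E K c from rfl, h] at hmem
  obtain ⟨l, hc, hlen, hlast⟩ := hmem
  cases l with
  | nil => simp at hlen
  | cons d l' =>
    have hchain := List.chain_cons.1 hc
    have hdmem : l'.length ∈ distSet E K d := by
      refine ⟨l', hchain.2, rfl, ?_⟩
      rw [List.getLast_cons_cons] at hlast
      exact hlast
    refine ⟨d, hchain.1, ⟨l'.length, hdmem⟩, ?_⟩
    have h1 : dK E K d ≤ r := by
      have h0 : dK E K d ≤ l'.length := Nat.sInf_le hdmem
      simp at hlen
      omega
    have h2 : dK E K c ≤ dK E K d + 1 := dK_le_succ hchain.1 ⟨l'.length, hdmem⟩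
    omega

lemma trek_snoc {G : Fin n → Fin n → Prop} {x a c : Fin n}
    (h : Trek G K x a) (hac : G a c) (hc : c ∉ K) : Trek G K x c := by
  obtain ⟨t, ht, h1, h2⟩ := h
  exact ⟨t, ht, h1, h2.tail ⟨hac, hc⟩⟩

lemma lemC (hE : ∀ i, ¬ Relation.TransGen E i i)
    (hskel : SameSkeleton E F)
    (huc : ∀ i k j, UnshieldedCollider E i k j ↔ UnshieldedCollider F i k j)
    {i j : Fin n} :
    ∀ (r : ℕ) (c a b : Fin n),
    (distSet E K c).Nonempty → dK E K c = r →
    Trek F K i a → Trek F K j b → E a c → F a c → E b c → F b c →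
    ((a ≠ b ∧ ¬(E a b ∨ E b a)) ∨ (a = b ∧ dK E K a = r + 1)) →
    Col F K i j := by
  intro r
  induction r with
  | zero =>
    intro c a b hne h0 hTia hTjb hEac hFac hEbc hFbc _
    have hcK : c ∈ K := K_of_dK_zero hne h0
    exact ⟨c, anc_of_K hcK, ⟨a, hTia, hFac⟩, ⟨b, hTjb, hFbc⟩⟩
  | succ r ih =>
    intro c a b hne hr hTia hTjb hEac hFac hEbc hFbc hinv
    have hcK : c ∉ K := fun hk => by
      rw [dK_of_K hk] at hr; exact absurd hr (by simp)
    obtain ⟨d, hcd, hdne, hdr⟩ := dK_step hne hr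
    rcases (hskel c d).1 (Or.inl hcd) with hFcd | hFdc
    · have hTic : Trek F K i c := trek_snoc hTia hFac hcK
      have hTjc : Trek F K j c := trek_snoc hTjb hFbc hcK
      exact ih d c c hdne hdr hTic hTjc hcd hFcd hcd hFcd (Or.inr ⟨rfl, hr⟩)
    · -- F d c
      have step : ∀ a' : Fin n, E a' c → F a' c → E a' d := by
        intro a' hEa'c hFa'c
        have hnad : a' ≠ d := fun he => acyc2 hE hEa'c (he ▸ hcd)
        have hadjad : E a' d ∨ E d a' := by
          by_contra hnadj
          have hnadjF : ¬ (F a' d ∨ F d a') := fun hf => hnadj ((hskel a' d).2 hf)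
          have hucF : UnshieldedCollider F a' c d := ⟨hFa'c, hFdc, hnad, hnadjF⟩
          have hucE := (huc _ _ _).2 hucF
          exact acyc2 hE hcd hucE.2.1
        exact hadjad.resolve_right (acyc3 hE hEa'c hcd)
      have hEad : E a d := step a hEac hFac
      have hEbd : E b d := step b hEbc hFbc
      rcases hinv with ⟨hne', hnadj'⟩ | ⟨heq, hdeg⟩
      · have hucE : UnshieldedCollider E a d b := ⟨hEad, hEbd, hne', hnadj'⟩
        have hucF := (huc _ _ _).1 hucE
        exact ih d a b hdne hdr hTia hTjb hEad hucF.1 hEbd hucF.2.1 (Or.inl ⟨hne', hnadj'⟩)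
      · have hle : dK E K a ≤ r + 1 := by
          have := dK_le_succ hEad hdne
          omega
        omega


lemma centers : ∀ (l : List (Fin n)) (v0 u : Fin n), u ∈ l →
    (∃ a c, [a,u,c] <:+: v0::l) ∨ ((v0::l).getLast? = some u) := by
  intro l
  induction l with
  | nil => intro v0 u hu; simp at hu
  | cons u0 l' ih =>
    intro v0 u hu
    rcases List.mem_cons.1 hu with rfl | hu
    · cases l' with
      | nil => right; rfl
      | cons w r => exact Or.inl ⟨v0, w, ⟨[], r, rfl⟩⟩
    · rcases ih u0 u hu with ⟨a, c, htrip⟩ | hlast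
      · exact Or.inl ⟨a, c, List.infix_cons_iff.2 (Or.inr htrip)⟩
      · right; rw [List.getLast?_cons_cons]; exact hlast

lemma ext_desc (hE : ∀ i, ¬ Relation.TransGen E i i) :
    ∀ (l : List (Fin n)) (x v y : Fin n),
    IsWalk E (x::v::l) →
    (∀ a b c, [a,b,c] <:+: (x::v::l) →
      ((E a b ∧ E c b) → b ∈ ancSet E K) ∧ (¬(E a b ∧ E c b) → b ∉ K)) →
    colliderCount E (x::v::l) ≤ 1 →
    (x::v::l).getLast? = some y → y ∉ K → E x v →
    Dp E K x y ∨ ∃ a c, Dp E K x a ∧ E a c ∧ c ∈ ancSet E K ∧ Into E K y c := by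
  intro l
  induction l with
  | nil =>
    intro x v y hw hD hc hl hy hxv
    have hvy : v = y := by simpa using hl
    subst hvy
    exact Or.inl (Relation.ReflTransGen.single ⟨hxv, hy⟩)
  | cons w r ih =>
    intro x v y hw hD hc hl hy hxv
    by_cases hcol : E w v
    · -- collider at v
      right
      have hvanc : v ∈ ancSet E K := (hD x v w ⟨[], r, rfl⟩).1 ⟨hxv, hcol⟩
      have hcnt0 : colliderCount E (v::w::r) = 0 := by
        rw [count_cons3, if_pos ⟨hxv, hcol⟩] at hc
        omega
      have hnc : NoCol E (v::w::r) := nocol_of_count_zero hcnt0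
      have hKtail : ∀ u ∈ w::r, u ∉ K := by
        intro u hu
        rcases centers (w::r) v u hu with ⟨a, c, htrip⟩ | hlast
        · exact (hD a u c (List.infix_cons_iff.2 (Or.inr htrip))).2 (hnc a u c htrip)
        · have : u = y := by
            rw [← List.getLast?_cons_cons (a := x)] at hlast
            rw [hlast] at hl
            simpa using hl
          exact this ▸ hy
      have hNCW : NCW E K (w::r) w y := by
        refine ⟨(List.isChain_cons_cons.1 (List.isChain_cons_cons.1 hw).2).2,
          nocol_infix hnc (List.infix_cons_iff.2 (Or.inr (List.infix_refl _))),
          hKtail, rfl, ?_⟩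
        exact ((List.getLast?_cons_cons (l := w::r)).trans
          (List.getLast?_cons_cons)).symm.trans hl
      have htrek : Trek E K y w := ncw_to_trek _ _ _ (ncw_reverse hNCW)
      exact ⟨x, v, Relation.ReflTransGen.refl, hxv, hvanc, ⟨w, htrek, hcol⟩⟩
    · -- non-collider at v
      have hvK : v ∉ K := (hD x v w ⟨[], r, rfl⟩).2 (fun hcc => hcol hcc.2)
      have hvw : E v w :=
        ((List.isChain_cons_cons.1 (List.isChain_cons_cons.1 hw).2).1).resolve_right hcol
      have hDt : ∀ a b c, [a,b,c] <:+: (v::w::r) →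
          ((E a b ∧ E c b) → b ∈ ancSet E K) ∧ (¬(E a b ∧ E c b) → b ∉ K) :=
        fun a b c ht => hD a b c (List.infix_cons_iff.2 (Or.inr ht))
      have hct : colliderCount E (v::w::r) ≤ 1 :=
        le_trans (count_cons_le x (v::w::r)) hc
      rcases ih v w y (List.isChain_cons_cons.1 hw).2 hDt hct
          ((List.getLast?_cons_cons (b := v)).symm.trans hl) hy hvw
          with hdp | ⟨a, c, hdpa, hac, hanc, hinto⟩
      · exact Or.inl (Relation.ReflTransGen.head ⟨hxv, hvK⟩ hdp)
      · exact Or.inr ⟨a, c, Relation.ReflTransGen.head ⟨hxv, hvK⟩ hdpa, hac, hanc, hinto⟩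

lemma extract (hE : ∀ i, ¬ Relation.TransGen E i i) :
    ∀ (l : List (Fin n)) (x y : Fin n),
    IsWalk E (x::l) →
    (∀ a b c, [a,b,c] <:+: (x::l) →
      ((E a b ∧ E c b) → b ∈ ancSet E K) ∧ (¬(E a b ∧ E c b) → b ∉ K)) →
    colliderCount E (x::l) ≤ 1 →
    (x::l).getLast? = some y → x ∉ K → y ∉ K → l ≠ [] →
    Trek E K x y ∨ Col E K x y := by
  intro l
  induction l with
  | nil => intro x y _ _ _ _ _ _ hne; exact absurd rfl hne
  | cons v l' ih =>
    intro x y hw hD hc hl hx hy _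
    rcases (List.isChain_cons_cons.1 hw).1 with hxv | hvx
    · -- forward first edge
      rcases ext_desc hE l' x v y hw hD hc hl hy hxv with hdp | ⟨a, c, hdpa, hac, hanc, hinto⟩
      · exact Or.inl ⟨x, hx, Relation.ReflTransGen.refl, hdp⟩
      · exact Or.inr ⟨c, hanc, ⟨a, ⟨x, hx, Relation.ReflTransGen.refl, hdpa⟩, hac⟩, hinto⟩
    · -- backward first edge
      cases l' with
      | nil =>
        have hvy : v = y := by simpa using hl
        subst hvy
        exact Or.inl ⟨v, hy, Relation.ReflTransGen.single ⟨hvx, hx⟩, Relation.ReflTransGen.refl⟩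
      | cons w r =>
        have hvK : v ∉ K := (hD x v w ⟨[], r, rfl⟩).2 (fun hcc => acyc2 hE hvx hcc.1)
        have hDt : ∀ a b c, [a,b,c] <:+: (v::w::r) →
            ((E a b ∧ E c b) → b ∈ ancSet E K) ∧ (¬(E a b ∧ E c b) → b ∉ K) :=
          fun a b c ht => hD a b c (List.infix_cons_iff.2 (Or.inr ht))
        rcases ih v y (List.isChain_cons_cons.1 hw).2 hDt
            (le_trans (count_cons_le x (v::w::r)) hc)
            ((List.getLast?_cons_cons (b := v)).symm.trans hl) hvK hy (by simp)
            with htrek | hcol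
        · obtain ⟨t, ht, h1, h2⟩ := htrek
          exact Or.inl ⟨t, ht, h1.tail ⟨hvx, hx⟩, h2⟩
        · obtain ⟨c, hanc, ⟨a, ⟨t, ht, h1, h2⟩, hac⟩, hj⟩ := hcol
          exact Or.inr ⟨c, hanc, ⟨a, ⟨t, ht, h1.tail ⟨hvx, hx⟩, h2⟩, hac⟩, hj⟩

lemma starConn_to_sem (hE : ∀ i, ¬ Relation.TransGen E i i) {i j : Fin n}
    (h : StarConn E K i j) (hi : i ∉ K) (hj : j ∉ K) :
    Trek E K i j ∨ Col E K i j := by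
  obtain ⟨p, hh, hl, hlen, ⟨⟨hw, hD⟩, hcnt⟩⟩ := h
  cases p with
  | nil => simp at hh
  | cons x l =>
    have hx : x = i := by simpa using hh
    subst hx
    cases l with
    | nil => simp at hlen
    | cons v l' => exact extract hE (v::l') x j hw hD hcnt hl hi hj (by simp)


lemma len_pos_of_head? {α : Type*} {l : List α} {x : α} (h : l.head? = some x) :
    1 ≤ l.length := by
  cases l with
  | nil => simp at h
  | cons a t => simp

lemma trek_to_star (hE : ∀ i, ¬ Relation.TransGen E i i) {i j : Fin n}
    (hij : i ≠ j) (h : Trek E K i j) : StarConn E K i j := by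
  obtain ⟨l, hw, hnc, hK, hh, hl⟩ := trek_to_ncw hE h
  refine ⟨l, hh, hl, ?_, ⟨⟨hw, ?_⟩, ?_⟩⟩
  · match l with
    | [] => simp at hh
    | [z] =>
      exfalso
      apply hij
      have h1 : z = i := by simpa using hh
      have h2 : z = j := by simpa using hl
      rw [← h1, ← h2]
    | z :: w :: r => simp
  · intro a b c ht
    exact ⟨fun hcol => absurd hcol (hnc a b c ht),
      fun _ => hK b (ht.subset (by simp))⟩
  · rw [count_zero_of_nocol hnc]
    exact Nat.zero_le 1

lemma col_to_star (hE : ∀ i, ¬ Relation.TransGen E i i) {i j : Fin n}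
    (h : Col E K i j) : StarConn E K i j := by
  obtain ⟨c, hanc, ⟨a, hta, hac⟩, ⟨b, htb, hbc⟩⟩ := h
  obtain ⟨l1, hw1, hnc1, hK1, hh1, hl1⟩ := trek_to_ncw hE hta
  obtain ⟨l2, h2⟩ := trek_to_ncw hE htb
  obtain ⟨hw2, hnc2, hK2, hh2, hl2⟩ := ncw_reverse h2
  set W2 := l2.reverse with hW2
  have hW2b : W2.head? = some b := hh2
  have hW2j : W2.getLast? = some j := hl2
  -- NoCol of the two halves
  have hncA : NoCol E (l1 ++ [c]) := by
    intro a' b' c' ht hcol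
    rcases trip_append ht with hin | hin | ⟨p, hp, hin⟩ | ⟨p, hp, hin⟩
    · exact hnc1 a' b' c' hin hcol
    · exact absurd hin.length_le (by simp)
    · exact absurd hin.length_le (by simp)
    · have hc' : c = c' := by simpa using hin
      have hb' : b' = a := by
        rw [hp, show p ++ [a', b'] = (p ++ [a']) ++ [b'] by simp,
          List.getLast?_concat] at hl1
        exact Option.some_injective _ hl1
      rw [hb', ← hc'] at hcol
      exact acyc2 hE hac hcol.2
  have hncB : NoCol E (c :: W2) := by
    intro a' b' c' ht hcol
    rcases List.infix_cons_iff.1 ht with hpre | hin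
    · obtain ⟨t', ht'⟩ := hpre
      simp only [List.cons_append, List.nil_append] at ht'
      injection ht' with e1 ht2
      have hb' : b' = b := by
        rw [← ht2] at hW2b
        simpa using hW2b
      rw [e1, hb'] at hcol
      exact acyc2 hE hbc hcol.1
    · exact hnc2 a' b' c' hin hcol
  refine ⟨l1 ++ c :: W2, head?_app hh1, ?_, ?_, ⟨⟨?_, ?_⟩, ?_⟩⟩
  · rw [last?_app2 (by simp)]
    cases hW : W2 with
    | nil => rw [hW] at hW2b; simp at hW2b
    | cons z r =>
      rw [List.getLast?_cons_cons, ← hW]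
      exact hW2j
  · have t1 := len_pos_of_head? hh1
    simp only [List.length_append, List.length_cons]
    omega
  · rw [IsWalk, List.Chain', List.isChain_append]
    refine ⟨hw1, ?_, ?_⟩
    · refine List.isChain_cons.2 ⟨?_, hw2⟩
      intro z hz
      rw [hW2b] at hz
      simp only [Option.mem_def, Option.some.injEq] at hz
      subst hz
      exact Or.inr hbc
    · intro p hp q hq
      rw [hl1] at hp
      simp only [Option.mem_def, Option.some.injEq, List.head?_cons] at hp hq
      subst hp; subst hq
      exact Or.inl hac
  · -- triple conditions
    intro a' b' c' ht
    rcases trip_append ht with hin | hin | ⟨p, hp, hin⟩ | ⟨p, hp, hin⟩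
    · exact ⟨fun hcol => absurd hcol (hnc1 a' b' c' hin),
        fun _ => hK1 b' (hin.subset (by simp))⟩
    · refine ⟨fun hcol => absurd hcol (hncB a' b' c' hin), fun _ => ?_⟩
      rcases List.infix_cons_iff.1 hin with hpre | hin'
      · obtain ⟨t', ht'⟩ := hpre
        simp only [List.cons_append, List.nil_append] at ht'
        injection ht' with e1 ht2
        apply hK2
        rw [← ht2]
        simp
      · exact hK2 b' (hin'.subset (by simp))
    · -- seam triple (a, c, b)
      have ha' : a' = a := by
        rw [hp, List.getLast?_concat] at hl1
        exact Option.some_injective _ hl1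
      obtain ⟨t', ht'⟩ := hin
      simp only [List.cons_append, List.nil_append] at ht'
      injection ht' with e1 ht2
      have hc' : c' = b := by
        rw [← ht2] at hW2b
        simpa using hW2b
      refine ⟨fun _ => ?_, fun hn => ?_⟩
      · rw [e1]; exact hanc
      · exfalso
        apply hn
        rw [ha', hc', e1]
        exact ⟨hac, hbc⟩
    · -- seam triple (x, a, c)
      have hb' : b' = a := by
        rw [hp, show p ++ [a', b'] = (p ++ [a']) ++ [b'] by simp,
          List.getLast?_concat] at hl1
        exact Option.some_injective _ hl1
      have hc' : c' = c := by simpa using hin.symm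
      refine ⟨fun hcol => ?_, fun _ => ?_⟩
      · exfalso
        rw [hb', hc'] at hcol
        exact acyc2 hE hac hcol.2
      · rw [hb']
        exact hK1 a (mem_of_last? hl1)
  · exact count_le_one_mid l1 c W2 hncA hncB


lemma oneDir (hE : ∀ i, ¬ Relation.TransGen E i i) (hF : ∀ i, ¬ Relation.TransGen F i i)
    (hskel : SameSkeleton E F)
    (huc : ∀ i k j, UnshieldedCollider E i k j ↔ UnshieldedCollider F i k j)
    {i j : Fin n} (hij : i ≠ j) (hi : i ∉ K) (hj : j ∉ K)
    (h : StarConn E K i j) : StarConn F K i j := by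
  rcases starConn_to_sem hE h hi hj with htrek | hcol
  · exact trek_to_star hF hij (trek_transfer hE hskel huc htrek)
  · obtain ⟨c, hanc, ⟨a, hta, hac⟩, ⟨b, htb, hbc⟩⟩ := hcol
    obtain ⟨l1, h1⟩ := trek_to_ncw hE hta
    obtain ⟨l2, h2⟩ := trek_to_ncw hE htb
    rcases colRed hE (l1.length + l2.length) l1 l2 i j a b c le_rfl h1 h2 hac hbc hanc
      with htrek | hnice
    · exact trek_to_star hF hij (trek_transfer hE hskel huc htrek)
    · obtain ⟨a', b', c', hne, hnadj, hta', htb', hac', hbc', hanc'⟩ := hnice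
      have hFta := trek_transfer hE hskel huc hta'
      have hFtb := trek_transfer hE hskel huc htb'
      have hucE : UnshieldedCollider E a' c' b' := ⟨hac', hbc', hne, hnadj⟩
      have hucF := (huc _ _ _).1 hucE
      have hcolF : Col F K i j := lemC hE hskel huc (dK E K c') c' a' b'
        (distSet_nonempty hanc') rfl hFta hFtb hac' hucF.1 hbc' hucF.2.1
        (Or.inl ⟨hne, hnadj⟩)
      exact col_to_star hF hcolF

end SP

/-- If two DAGs `E` and `F` have the same skeleton and the same
unshielded colliders, then for every conditioning set `K` and every pair of vertices
`i, j ∉ K`, there is a *-connecting path between `i` and `j` given `K` in `E` iff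
there is one in `F`. -/
theorem starConn_invariant {n : ℕ} (E F : Fin n → Fin n → Prop)
    (hE : ∀ i, ¬ Relation.TransGen E i i) (hF : ∀ i, ¬ Relation.TransGen F i i)
    (hskel : SameSkeleton E F)
    (huc : ∀ i k j, UnshieldedCollider E i k j ↔ UnshieldedCollider F i k j)
    (K : Set (Fin n)) (i j : Fin n) (hij : i ≠ j) (hi : i ∉ K) (hj : j ∉ K) :
    StarConn E K i j ↔ StarConn F K i j := by
  exact ⟨SP.oneDir hE hF hskel huc hij hi hj,
    SP.oneDir hF hE (fun a b => (hskel a b).symm) (fun a b c => (huc a b c).symm) hij hi hj⟩
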